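/- arXiv:0711.2135 — 2 statements merged into one kernel-verified Lean document; each statement's English description precedes it below -/
import Mathlib

section
/- Let A be a real square matrix with a simple eigenvalue r > 0 such that every other eigenvalue has modulus strictly less than r, and let v be an eigenvector of A for r and u an eigenvector of the transpose ᵗA for r, normalized so that (u, v) = 1. Then for every vector x, lim_{n→∞} r^{−n} A^n x = (u, x) v. -/
open Filter

section PerronAux

open Polynomial Matrix Module Topology
open scoped ENNReal NNReal

attribute [local instance] Matrix.linftyOpNormedRing Matrix.linftyOpNormedAlgebra

private lemma my_eval_charpoly {n : Type*} [Fintype n] [DecidableEq n] {K : Type*} [CommRing K]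
    (M : Matrix n n K) (μ : K) : M.charpoly.eval μ = (μ • (1 : Matrix n n K) - M).det := by
  rw [charpoly, eval_det, matPolyEquiv_charmatrix]
  simp [eval_sub, smul_one_eq_diagonal]

private lemma my_spec_vec {d : ℕ} (M : Matrix (Fin d) (Fin d) ℂ) {μ : ℂ}
    (h : μ ∈ spectrum ℂ M) : ∃ z : Fin d → ℂ, z ≠ 0 ∧ M.mulVec z = μ • z := by
  rw [spectrum.mem_iff] at h
  rw [Matrix.isUnit_iff_isUnit_det, isUnit_iff_ne_zero, not_not] at h
  obtain ⟨z, hz, hz0⟩ := (Matrix.exists_mulVec_eq_zero_iff).2 h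
  refine ⟨z, hz, ?_⟩
  have h1 : (algebraMap ℂ (Matrix (Fin d) (Fin d) ℂ)) μ *ᵥ z = μ • z := by
    ext i
    simp [Matrix.algebraMap_eq_diagonal, Matrix.mulVec_diagonal]
  rw [Matrix.sub_mulVec, h1] at hz0
  exact (sub_eq_zero.mp hz0).symm

private lemma my_charpoly_comp {d : ℕ} (M : Matrix (Fin d) (Fin d) ℂ) (μ : ℂ) :
    M.charpoly.comp (X + C μ) = (M - μ • (1 : Matrix (Fin d) (Fin d) ℂ)).charpoly := by
  apply Polynomial.funext
  intro t
  rw [eval_comp, my_eval_charpoly, my_eval_charpoly]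
  congr 1
  simp [eval_add, add_smul]
  abel

private lemma my_mult_ge {d : ℕ} (M : Matrix (Fin d) (Fin d) ℂ) (μ : ℂ) (a b : Fin d → ℂ)
    (ha : M.mulVec a = μ • a) (hb : M.mulVec b = μ • b)
    (hind : LinearIndependent ℂ ![a, b]) :
    2 ≤ M.charpoly.rootMultiplicity μ := by
  rw [Polynomial.rootMultiplicity_eq_natTrailingDegree, my_charpoly_comp]
  set N : Matrix (Fin d) (Fin d) ℂ := M - μ • 1 with hN
  have hchar : N.charpoly = (Matrix.toLin' N).charpoly := by
    rw [← LinearMap.charpoly_toMatrix (Matrix.toLin' N) (Pi.basisFun ℂ (Fin d)),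
      LinearMap.toMatrix_eq_toMatrix', LinearMap.toMatrix'_toLin']
  rw [hchar, ← LinearMap.finrank_maxGenEigenspace_zero_eq]
  have hmem : ∀ y : Fin d → ℂ, M.mulVec y = μ • y →
      y ∈ Module.End.maxGenEigenspace (Matrix.toLin' N) 0 := by
    intro y hy
    rw [Module.End.mem_maxGenEigenspace]
    refine ⟨1, ?_⟩
    simp only [zero_smul, sub_zero, pow_one]
    show Matrix.toLin' N y = 0
    rw [Matrix.toLin'_apply, hN, Matrix.sub_mulVec, hy, Matrix.smul_mulVec,
      Matrix.one_mulVec, sub_self]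
  have hspan : Submodule.span ℂ (Set.range ![a, b]) ≤
      Module.End.maxGenEigenspace (Matrix.toLin' N) 0 := by
    rw [Submodule.span_le]
    rintro y ⟨i, rfl⟩
    fin_cases i
    · exact hmem a ha
    · exact hmem b hb
  calc (2 : ℕ) = finrank ℂ (Submodule.span ℂ (Set.range ![a, b])) := by
        rw [finrank_span_eq_card hind]; simp
    _ ≤ finrank ℂ (Module.End.maxGenEigenspace (Matrix.toLin' N) 0) :=
        Submodule.finrank_mono hspan

private lemma vecMulVec_mulVec' {d : ℕ} {K : Type*} [CommRing K] (v u y : Fin d → K) :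
    (vecMulVec v u).mulVec y = (dotProduct u y) • v := by
  ext i
  simp only [vecMulVec, Matrix.mulVec, dotProduct, Pi.smul_apply, smul_eq_mul,
    Matrix.of_apply]
  rw [Finset.sum_mul]
  exact Finset.sum_congr rfl fun j _ => by ring

private lemma my_key {d : ℕ} (M : Matrix (Fin d) (Fin d) ℂ) (r : ℝ) (hr : 0 < r)
    (u v : Fin d → ℂ)
    (hv : M.mulVec v = (r : ℂ) • v)
    (hu : M.transpose.mulVec u = (r : ℂ) • u)
    (hnorm : dotProduct u v = 1)
    (hsimple : M.charpoly.rootMultiplicity (r : ℂ) = 1)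
    (hdom : ∀ μ : ℂ, M.charpoly.IsRoot μ → μ ≠ (r : ℂ) → ‖μ‖ < r) :
    ∀ μ ∈ spectrum ℂ (M - (r : ℂ) • vecMulVec v u), ‖μ‖₊ < r.toNNReal := by
  intro μ hμ
  obtain ⟨z, hz, hzeq⟩ := my_spec_vec _ hμ
  have hB : ∀ y : Fin d → ℂ, (M - (r : ℂ) • vecMulVec v u).mulVec y
      = M.mulVec y - ((r : ℂ) * dotProduct u y) • v := by
    intro y
    rw [Matrix.sub_mulVec, Matrix.smul_mulVec, vecMulVec_mulVec', smul_smul]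
  have huA : ∀ y : Fin d → ℂ, dotProduct u (M.mulVec y)
      = (r : ℂ) * dotProduct u y := by
    intro y
    rw [dotProduct_mulVec, ← Matrix.mulVec_transpose, hu]
    simp [smul_dotProduct]
  have hudot : dotProduct u ((M - (r : ℂ) • vecMulVec v u).mulVec z) = 0 := by
    rw [hB, dotProduct_sub, huA, dotProduct_smul, hnorm]
    ring_nf
  rw [hzeq] at hudot
  rw [dotProduct_smul] at hudot
  rcases eq_or_ne μ 0 with rfl | hμ0
  · simpa using hr
  have huz : dotProduct u z = 0 := by
    rcases mul_eq_zero.mp hudot with h | h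
    · exact absurd h hμ0
    · exact h
  have hMz : M.mulVec z = μ • z := by
    rw [hB, huz] at hzeq
    simpa using hzeq
  have hroot : M.charpoly.IsRoot μ := by
    rw [IsRoot.def, my_eval_charpoly]
    rw [← Matrix.exists_mulVec_eq_zero_iff]
    refine ⟨z, hz, ?_⟩
    rw [Matrix.sub_mulVec, hMz, Matrix.smul_mulVec, Matrix.one_mulVec, sub_self]
  rcases eq_or_ne μ (r : ℂ) with rfl | hμr
  · exfalso
    have hind : LinearIndependent ℂ ![v, z] := by
      rw [LinearIndependent.pair_iff]
      intro s t hst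
      have h1 : dotProduct u (s • v + t • z) = 0 := by rw [hst]; simp
      rw [dotProduct_add, dotProduct_smul, dotProduct_smul,
        hnorm, huz] at h1
      have hs : s = 0 := by simpa using h1
      subst hs
      simp only [zero_smul, zero_add] at hst
      rcases smul_eq_zero.mp hst with h | h
      · exact ⟨rfl, h⟩
      · exact absurd h hz
    have := my_mult_ge M (r : ℂ) v z hv hMz hind
    omega
  · have := hdom μ hroot hμr
    rw [Real.lt_toNNReal_iff_coe_lt]
    simpa using this

private lemma my_norm_decay {d : ℕ} (hd : 0 < d) (Bc : Matrix (Fin d) (Fin d) ℂ) (r : ℝ)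
    (hr : 0 < r) (hspec : ∀ μ ∈ spectrum ℂ Bc, ‖μ‖₊ < r.toNNReal) (wc : Fin d → ℂ) :
    Tendsto (fun n : ℕ => (r ^ n)⁻¹ * ‖(Bc ^ n).mulVec wc‖) atTop (𝓝 0) := by
  haveI : Nonempty (Fin d) := ⟨⟨0, hd⟩⟩
  have hne : (spectrum ℂ Bc).Nonempty := spectrum.nonempty Bc
  have hρ : spectralRadius ℂ Bc < (r.toNNReal : ℝ≥0∞) :=
    spectrum.spectralRadius_lt_of_forall_lt_of_nonempty hne hspec
  obtain ⟨c, hc1, hc2⟩ := ENNReal.lt_iff_exists_nnreal_btwn.mp hρ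
  have hcr : (c : ℝ) < r := by
    rw [ENNReal.coe_lt_coe] at hc2
    exact Real.lt_toNNReal_iff_coe_lt.mp hc2
  have hgel := spectrum.pow_nnnorm_pow_one_div_tendsto_nhds_spectralRadius Bc
  have hev : ∀ᶠ n : ℕ in atTop, (‖Bc ^ n‖₊ : ℝ≥0∞) ^ (1 / (n : ℝ)) < (c : ℝ≥0∞) :=
    hgel.eventually_lt_const hc1
  have hbound : ∀ᶠ n : ℕ in atTop, ‖Bc ^ n‖ ≤ (c : ℝ) ^ n := by
    filter_upwards [hev, eventually_ge_atTop 1] with n hn hn1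
    have hn0 : (n : ℝ) ≠ 0 := by positivity
    have h2 : ((‖Bc ^ n‖₊ : ℝ≥0∞) ^ (1 / (n : ℝ))) ^ (n : ℝ) < (c : ℝ≥0∞) ^ (n : ℝ) :=
      ENNReal.rpow_lt_rpow hn (by positivity)
    rw [← ENNReal.rpow_mul, one_div, inv_mul_cancel₀ hn0, ENNReal.rpow_one,
      ENNReal.rpow_natCast, ← ENNReal.coe_pow, ENNReal.coe_lt_coe] at h2
    exact_mod_cast h2.le
  apply squeeze_zero_norm' (a := fun n => ((c : ℝ) / r) ^ n * ‖wc‖)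
  · filter_upwards [hbound] with n hn
    have h1 : ‖(Bc ^ n).mulVec wc‖ ≤ ‖Bc ^ n‖ * ‖wc‖ := Matrix.linfty_opNorm_mulVec _ _
    have h3 : ‖(r ^ n)⁻¹ * ‖(Bc ^ n).mulVec wc‖‖ = (r ^ n)⁻¹ * ‖(Bc ^ n).mulVec wc‖ := by
      rw [Real.norm_eq_abs, abs_of_nonneg]
      positivity
    rw [h3]
    calc (r ^ n)⁻¹ * ‖(Bc ^ n).mulVec wc‖ ≤ (r ^ n)⁻¹ * (‖Bc ^ n‖ * ‖wc‖) := by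
          apply mul_le_mul_of_nonneg_left h1 (by positivity)
      _ ≤ (r ^ n)⁻¹ * ((c : ℝ) ^ n * ‖wc‖) := by
          apply mul_le_mul_of_nonneg_left (mul_le_mul_of_nonneg_right hn (norm_nonneg _))
            (by positivity)
      _ = ((c : ℝ) / r) ^ n * ‖wc‖ := by
          rw [div_pow]
          field_simp
  · have h4 : Tendsto (fun n : ℕ => ((c : ℝ) / r) ^ n) atTop (𝓝 0) := by
      apply tendsto_pow_atTop_nhds_zero_of_lt_one (by positivity) (by
        rw [div_lt_one hr]; exact hcr)
    simpa using h4.mul_const ‖wc‖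

end PerronAux

/-- Perron-type asymptotics. If `r > 0` is a simple eigenvalue of `A`
dominating all other (complex) eigenvalues in modulus, with right eigenvector `v` and
left eigenvector `u` normalized by `(u,v) = 1`, then `r^{-n} A^n x → (u,x) v`. -/
theorem stmt7 {d : ℕ} (A : Matrix (Fin d) (Fin d) ℝ) (r : ℝ) (hr : 0 < r)
    (u v : Fin d → ℝ)
    (hv : A.mulVec v = r • v)
    (hu : A.transpose.mulVec u = r • u)
    (hnorm : dotProduct u v = 1)
    (hsimple : ((A.map (algebraMap ℝ ℂ)).charpoly).rootMultiplicity (r : ℂ) = 1)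
    (hdom : ∀ μ : ℂ, ((A.map (algebraMap ℝ ℂ)).charpoly).IsRoot μ → μ ≠ (r : ℂ) →
      ‖μ‖ < r)
    (x : Fin d → ℝ) :
    Tendsto (fun n : ℕ => (r ^ n)⁻¹ • (A ^ n).mulVec x) atTop
      (nhds ((dotProduct u x) • v)) := by
  classical
  rcases Nat.eq_zero_or_pos d with hd | hd
  · subst hd
    have h0 : ∀ n : ℕ, (r ^ n)⁻¹ • (A ^ n).mulVec x = (dotProduct u x) • v :=
      fun n => Subsingleton.elim _ _
    simp only [h0]
    exact tendsto_const_nhds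
  set f : ℝ →+* ℂ := (algebraMap ℝ ℂ) with hf
  -- real-side setup
  set w : Fin d → ℝ := x - (dotProduct u x) • v with hw
  set B : Matrix (Fin d) (Fin d) ℝ := A - r • Matrix.vecMulVec v u with hBdef
  have hB : ∀ y : Fin d → ℝ, B.mulVec y
      = A.mulVec y - (r * dotProduct u y) • v := by
    intro y
    rw [hBdef, Matrix.sub_mulVec, Matrix.smul_mulVec, vecMulVec_mulVec', smul_smul]
  have huA : ∀ y : Fin d → ℝ, dotProduct u (A.mulVec y)
      = r * dotProduct u y := by
    intro y
    rw [Matrix.dotProduct_mulVec, ← Matrix.mulVec_transpose, hu]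
    simp [smul_dotProduct]
  have hw0 : dotProduct u w = 0 := by
    rw [hw, dotProduct_sub, dotProduct_smul, hnorm]
    simp
  have hker : ∀ n : ℕ, dotProduct u ((B ^ n).mulVec w) = 0 := by
    intro n
    induction n with
    | zero => simpa using hw0
    | succ n ih =>
      rw [pow_succ', ← Matrix.mulVec_mulVec, hB, dotProduct_sub, huA, ih,
        dotProduct_smul, hnorm]
      simp
  have hiter : ∀ n : ℕ, (A ^ n).mulVec x
      = (r ^ n * dotProduct u x) • v + (B ^ n).mulVec w := by
    intro n
    induction n with
    | zero =>
      simp only [pow_zero, Matrix.one_mulVec, one_mul, hw]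
      abel
    | succ n ih =>
      rw [pow_succ', ← Matrix.mulVec_mulVec, ih, Matrix.mulVec_add, Matrix.mulVec_smul, hv]
      have hABn : A.mulVec ((B ^ n).mulVec w) = B.mulVec ((B ^ n).mulVec w) := by
        rw [hB, hker n, mul_zero, zero_smul, sub_zero]
      rw [hABn, Matrix.mulVec_mulVec, ← pow_succ']
      rw [smul_smul]
      ring_nf
  -- complex side
  have hd' : (0 : ℕ) < d := hd
  set Bc : Matrix (Fin d) (Fin d) ℂ := B.map f with hBc
  have hBceq : Bc = A.map f - (r : ℂ) • Matrix.vecMulVec (f ∘ v) (f ∘ u) := by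
    ext i j
    simp only [hBc, hBdef, Matrix.map_apply, Matrix.sub_apply, Matrix.smul_apply,
      Matrix.vecMulVec_apply, smul_eq_mul, Function.comp_apply]
    simp only [map_sub, map_mul, hf, Complex.coe_algebraMap]
  have hvc : (A.map f).mulVec (f ∘ v) = (r : ℂ) • (f ∘ v) := by
    ext i
    rw [← RingHom.map_mulVec, hv]
    simp [hf]
  have huc : (A.map f).transpose.mulVec (f ∘ u) = (r : ℂ) • (f ∘ u) := by
    ext i
    rw [← Matrix.transpose_map, ← RingHom.map_mulVec, hu]
    simp [hf]
  have hnormc : dotProduct (f ∘ u) (f ∘ v) = 1 := by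
    rw [← RingHom.map_dotProduct, hnorm, map_one]
  have hspec : ∀ μ ∈ spectrum ℂ Bc, ‖μ‖₊ < r.toNNReal := by
    rw [hBceq]
    exact my_key (A.map f) r hr (f ∘ u) (f ∘ v) hvc huc hnormc hsimple hdom
  have hdecay := my_norm_decay hd' Bc r hr hspec (f ∘ w)
  -- transfer to the real sequence
  have hzero : Tendsto (fun n : ℕ => (r ^ n)⁻¹ • ((B ^ n).mulVec w)) atTop (nhds 0) := by
    rw [tendsto_zero_iff_norm_tendsto_zero]
    apply squeeze_zero (fun n => norm_nonneg _)
        (g := fun n => (r ^ n)⁻¹ * ‖(Bc ^ n).mulVec (f ∘ w)‖) _ hdecay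
    intro n
    have hmap : (Bc ^ n).mulVec (f ∘ w) = f ∘ ((B ^ n).mulVec w) := by
      have hpow : Bc ^ n = (B ^ n).map f := by
        rw [hBc, ← RingHom.mapMatrix_apply, ← map_pow, RingHom.mapMatrix_apply]
      ext i
      rw [hpow, ← RingHom.map_mulVec]
      rfl
    have hle : ‖(B ^ n).mulVec w‖ ≤ ‖(Bc ^ n).mulVec (f ∘ w)‖ := by
      rw [hmap]
      apply (pi_norm_le_iff_of_nonneg (norm_nonneg _)).mpr
      intro i
      calc ‖(B ^ n).mulVec w i‖ = ‖(⇑f ∘ (B ^ n).mulVec w) i‖ := by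
            simp [hf, Complex.coe_algebraMap, Complex.norm_real]
        _ ≤ _ := norm_le_pi_norm (⇑f ∘ (B ^ n).mulVec w) i
    rw [norm_smul, Real.norm_eq_abs, abs_of_nonneg (by positivity)]
    exact mul_le_mul_of_nonneg_left hle (by positivity)
  have heq : ∀ n : ℕ, (r ^ n)⁻¹ • ((A ^ n).mulVec x)
      = (dotProduct u x) • v + (r ^ n)⁻¹ • ((B ^ n).mulVec w) := by
    intro n
    rw [hiter n, smul_add]
    congr 1
    rw [smul_smul]
    congr 1
    field_simp
  simp only [heq]
  have := (tendsto_const_nhds (x := (dotProduct u x) • v) (f := atTop)).add hzero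
  simpa using this
end

section
/- Let (E, F) be a symmetric bilinear form with F ⊆ C(K) for a compact space K, and suppose there is C > 0 such that (max_{x∈K} f(x) − min_{x∈K} f(x))² ≤ C·E(f,f) for all f ∈ F. Let μ be a Borel probability measure on K with full support. Then for every nonempty open set U ⊆ K and every f ∈ F with f ≥ 1 μ-a.e. on U, one has E(f,f) + ∫_K f² dμ ≥ min{1/(4C), 1/4}. In particular the capacity of every nonempty open set is bounded below by min{1/(4C), 1/4}. -/
open MeasureTheory

/-- uniform positivity of capacity from the resistance estimate
`(osc f)² ≤ C·E(f,f)`: for any nonempty open `U` and `f ∈ F` with `f ≥ 1` μ-a.e. on `U`,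
`E(f,f) + ∫ f² dμ ≥ min(1/(4C), 1/4)`. -/
theorem stmt9 {K : Type*} [TopologicalSpace K] [CompactSpace K] [Nonempty K]
    [MeasurableSpace K] [BorelSpace K]
    (F : Set C(K, ℝ)) (E : C(K, ℝ) → C(K, ℝ) → ℝ)
    (C : ℝ) (hC : 0 < C)
    (hres : ∀ f ∈ F, ((⨆ x, f x) - ⨅ x, f x) ^ 2 ≤ C * E f f)
    (μ : Measure K) [IsProbabilityMeasure μ]
    (hsupp : ∀ U : Set K, IsOpen U → U.Nonempty → 0 < μ U)
    (U : Set K) (hU : IsOpen U) (hUne : U.Nonempty)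
    (f : C(K, ℝ)) (hf : f ∈ F)
    (hf1 : ∀ᵐ x ∂μ, x ∈ U → 1 ≤ f x) :
    min (1 / (4 * C)) (1 / 4) ≤ E f f + ∫ x, (f x) ^ 2 ∂μ := by
  have hbdd : BddAbove (Set.range f) := (isCompact_range f.continuous).bddAbove
  have hbdd' : BddBelow (Set.range f) := (isCompact_range f.continuous).bddBelow
  -- There exists a point with f x ≥ 1
  have hex : ∃ x, 1 ≤ f x := by
    by_contra h
    push_neg at h
    have : {x | x ∈ U → 1 ≤ f x} ⊆ Uᶜ := by
      intro x hx
      intro hxU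
      exact absurd (hx hxU) (not_le.mpr (h x))
    have h0 : μ Uᶜ ≠ 0 → False := by
      intro h0
      have := hsupp U hU hUne
      have hμU : μ U = 0 := by
        have : μ {x | x ∈ U → 1 ≤ f x}ᶜ = 0 := hf1
        have hsub : U ⊆ {x | x ∈ U → 1 ≤ f x}ᶜ := by
          intro x hx hmem
          exact absurd (hmem hx) (not_le.mpr (h x))
        exact le_antisymm (le_trans (measure_mono hsub) this.le) (zero_le)
      exact absurd hμU (hsupp U hU hUne).ne'
    have hμU : μ U = 0 := by
      have : μ {x | x ∈ U → 1 ≤ f x}ᶜ = 0 := hf1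
      have hsub : U ⊆ {x | x ∈ U → 1 ≤ f x}ᶜ := by
        intro x hx hmem
        exact absurd (hmem hx) (not_le.mpr (h x))
      exact le_antisymm (le_trans (measure_mono hsub) this.le) (zero_le)
    exact absurd hμU (hsupp U hU hUne).ne'
  obtain ⟨x₀, hx₀⟩ := hex
  have hM : 1 ≤ ⨆ x, f x := le_trans hx₀ (le_ciSup hbdd x₀)
  have hm : ∀ x, (⨅ y, f y) ≤ f x := fun x => ciInf_le hbdd' x
  have hE0 : 0 ≤ E f f := by
    have := hres f hf
    nlinarith [sq_nonneg ((⨆ x, f x) - ⨅ x, f x)]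
  by_cases hcase : (1:ℝ)/2 ≤ ⨅ x, f x
  · -- f ≥ 1/2 everywhere, so ∫ f² ≥ 1/4
    have hint : Integrable (fun x => (f x) ^ 2) μ := by
      have := (f.continuous.pow 2).continuousOn.integrableOn_compact'
        isCompact_univ MeasurableSet.univ (μ := μ)
      rwa [integrableOn_univ] at this
    have h14 : (1:ℝ)/4 ≤ ∫ x, (f x) ^ 2 ∂μ := by
      have : ∫ _x, (1:ℝ)/4 ∂μ ≤ ∫ x, (f x) ^ 2 ∂μ := by
        apply integral_mono (integrable_const _) hint
        intro x
        have h1 : (1:ℝ)/2 ≤ f x := le_trans hcase (hm x)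
        nlinarith
      simpa using this
    calc min (1 / (4 * C)) (1 / 4) ≤ 1/4 := min_le_right _ _
      _ ≤ E f f + ∫ x, (f x) ^ 2 ∂μ := by linarith
  · -- inf < 1/2, so osc ≥ 1/2, E ≥ 1/(4C)
    push_neg at hcase
    have hosc : (1:ℝ)/2 ≤ (⨆ x, f x) - ⨅ x, f x := by linarith
    have hE : 1 / (4 * C) ≤ E f f := by
      have h1 := hres f hf
      rw [div_le_iff₀ (by positivity)]
      nlinarith
    have hint0 : 0 ≤ ∫ x, (f x) ^ 2 ∂μ :=
      integral_nonneg fun x => sq_nonneg _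
    calc min (1 / (4 * C)) (1 / 4) ≤ 1 / (4 * C) := min_le_left _ _
      _ ≤ E f f + ∫ x, (f x) ^ 2 ∂μ := by linarith
end
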